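/- For every ε > 0 there exists k₀ such that for all k ≥ k₀, the Ramsey number satisfies R(3, k) ≤ (1 + ε) k² / log k; equivalently, every graph on at least (1 + ε) k² / log k vertices contains either a triangle or an independent set of size k. -/

import Mathlib

open MeasureTheory intervalIntegral

noncomputable def shf (d : ℝ) : ℝ := ∫ t in (0:ℝ)..1, (1-t)/(1+(d-1)*t)
noncomputable def shg (d : ℝ) : ℝ := -∫ t in (0:ℝ)..1, t*(1-t)/(1+(d-1)*t)^2

lemma Apos {d t : ℝ} (hd : 0 < d) (h0 : 0 ≤ t) (h1 : t ≤ 1) : 0 < 1+(d-1)*t := by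
  rcases eq_or_lt_of_le h0 with h | h
  · simp [← h]
  · nlinarith [mul_pos hd h]

lemma intf {d : ℝ} (hd : 0 < d) :
    IntervalIntegrable (fun t => (1-t)/(1+(d-1)*t)) volume 0 1 := by
  apply ContinuousOn.intervalIntegrable
  rw [Set.uIcc_of_le (by norm_num : (0:ℝ) ≤ 1)]
  apply ContinuousOn.div (by fun_prop) (by fun_prop)
  exact fun t ht => (Apos hd ht.1 ht.2).ne'

lemma intg {d : ℝ} (hd : 0 < d) :
    IntervalIntegrable (fun t => t*(1-t)/(1+(d-1)*t)^2) volume 0 1 := by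
  apply ContinuousOn.intervalIntegrable
  rw [Set.uIcc_of_le (by norm_num : (0:ℝ) ≤ 1)]
  apply ContinuousOn.div (by fun_prop) (by fun_prop)
  exact fun t ht => pow_ne_zero _ (Apos hd ht.1 ht.2).ne'

lemma shf_nonneg {d : ℝ} (hd : 0 < d) : 0 ≤ shf d := by
  apply intervalIntegral.integral_nonneg (by norm_num)
  intro t ht
  exact div_nonneg (by linarith [ht.2]) (Apos hd ht.1 ht.2).le

lemma shg_nonpos {d : ℝ} (hd : 0 < d) : shg d ≤ 0 := by
  apply neg_nonpos.mpr
  apply intervalIntegral.integral_nonneg (by norm_num)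
  intro t ht
  exact div_nonneg (mul_nonneg ht.1 (by linarith [ht.2])) (by positivity)

lemma shf_zero : shf 0 = 1 := by
  have h : ∀ᵐ t : ℝ, t ∈ Set.uIoc (0:ℝ) 1 → (1-t)/(1+((0:ℝ)-1)*t) = 1 := by
    rw [MeasureTheory.ae_iff]
    apply MeasureTheory.measure_mono_null (t := {(1:ℝ)}) ?_ Real.volume_singleton
    intro t ht
    rw [Set.mem_setOf_eq, Classical.not_imp] at ht
    simp only [Set.mem_singleton_iff]
    by_contra hne
    apply ht.2
    have : 1 + ((0:ℝ)-1)*t = 1 - t := by ring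
    rw [this, div_self (sub_ne_zero.mpr (fun h => hne h.symm))]
  have := intervalIntegral.integral_congr_ae h
  rw [shf, this]
  simp

lemma shf_one : shf 1 = 1/2 := by
  have : shf 1 = ∫ t in (0:ℝ)..1, (1-t) := by
    unfold shf
    congr 1
    ext t
    norm_num
  rw [this, intervalIntegral.integral_sub intervalIntegrable_const intervalIntegral.intervalIntegrable_id,
    integral_id, intervalIntegral.integral_const]
  norm_num

lemma shf_eq {d : ℝ} (hd : 0 < d) (hne : d ≠ 1) :
    shf d = (d * Real.log d - d + 1)/(d-1)^2 := by
  have ha : d - 1 ≠ 0 := sub_ne_zero.mpr hne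
  have key : ∀ t ∈ Set.uIcc (0:ℝ) 1,
      HasDerivAt (fun u => ((1+1/(d-1)) * Real.log (1+(d-1)*u) - u)/(d-1))
        ((1-t)/(1+(d-1)*t)) t := by
    intro t ht
    rw [Set.uIcc_of_le (by norm_num : (0:ℝ) ≤ 1)] at ht
    have hA : 0 < 1+(d-1)*t := Apos hd ht.1 ht.2
    have h1 : HasDerivAt (fun u : ℝ => 1+(d-1)*u) (d-1) t := by
      simpa using ((hasDerivAt_id t).const_mul (d-1)).const_add 1
    have h2 : HasDerivAt (fun u : ℝ => Real.log (1+(d-1)*u)) ((d-1)/(1+(d-1)*t)) t :=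
      h1.log hA.ne'
    have h3 := ((h2.const_mul (1+1/(d-1))).sub (hasDerivAt_id t)).div_const (d-1)
    refine h3.congr_deriv ?_
    field_simp
    ring
  have hint := intervalIntegral.integral_eq_sub_of_hasDerivAt key (intf hd)
  rw [shf, hint]
  have : 1 + (d-1)*1 = d := by ring
  rw [this]
  simp only [mul_zero, add_zero, Real.log_one]
  field_simp
  ring

lemma shg_eq {d : ℝ} (hd : 0 < d) (hne : d ≠ 1) :
    shg d = (2*(d-1) - (d+1) * Real.log d)/(d-1)^3 := by
  have ha : d - 1 ≠ 0 := sub_ne_zero.mpr hne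
  have key : ∀ t ∈ Set.uIcc (0:ℝ) 1,
      HasDerivAt (fun u => ((d+1) * Real.log (1+(d-1)*u) - (1+(d-1)*u) + d/(1+(d-1)*u))/(d-1)^3)
        (t*(1-t)/(1+(d-1)*t)^2) t := by
    intro t ht
    rw [Set.uIcc_of_le (by norm_num : (0:ℝ) ≤ 1)] at ht
    have hA : 0 < 1+(d-1)*t := Apos hd ht.1 ht.2
    have h1 : HasDerivAt (fun u : ℝ => 1+(d-1)*u) (d-1) t := by
      simpa using ((hasDerivAt_id t).const_mul (d-1)).const_add 1
    have h2 : HasDerivAt (fun u : ℝ => Real.log (1+(d-1)*u)) ((d-1)/(1+(d-1)*t)) t :=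
      h1.log hA.ne'
    have h4 : HasDerivAt (fun u : ℝ => d/(1+(d-1)*u)) (-(d*(d-1))/(1+(d-1)*t)^2) t := by
      have h5 := (hasDerivAt_const t d).div h1 hA.ne'
      refine h5.congr_deriv ?_
      ring
    have h3 := (((h2.const_mul (d+1)).sub h1).add h4).div_const ((d-1)^3)
    refine h3.congr_deriv ?_
    field_simp
    ring
  have hint := intervalIntegral.integral_eq_sub_of_hasDerivAt key (intg hd)
  rw [shg, hint]
  have : 1 + (d-1)*1 = d := by ring
  rw [this]
  simp only [mul_zero, add_zero, Real.log_one]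
  field_simp
  ring

lemma shkey3 {d : ℝ} (hd : 0 < d) : (d+1) * shf d ≤ 1 + (d-d^2) * shg d := by
  rcases eq_or_ne d 1 with rfl | hne
  · rw [shf_one]; norm_num
  · rw [shf_eq hd hne, shg_eq hd hne]
    have ha : d - 1 ≠ 0 := sub_ne_zero.mpr hne
    have : (d+1) * ((d * Real.log d - d + 1)/(d-1)^2)
        = 1 + (d-d^2) * ((2*(d-1) - (d+1) * Real.log d)/(d-1)^3) := by
      field_simp
      ring
    rw [this]

lemma shkey1 {d x : ℝ} (hd : 0 < d) (hx : 0 < x) :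
    shf d + (x - d) * shg d ≤ shf x := by
  have h1 := intf hx
  have h2 := intf hd
  have h3 := intg hd
  have heq : shf x - (shf d + (x-d) * shg d)
      = ∫ t in (0:ℝ)..1, ((1-t)/(1+(x-1)*t) - (1-t)/(1+(d-1)*t)
          + (x-d) * (t*(1-t)/(1+(d-1)*t)^2)) := by
    rw [intervalIntegral.integral_add (h1.sub h2) (h3.const_mul _),
      intervalIntegral.integral_sub h1 h2, intervalIntegral.integral_const_mul]
    unfold shf shg
    ring
  have hpos : 0 ≤ shf x - (shf d + (x-d) * shg d) := by
    rw [heq]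
    apply intervalIntegral.integral_nonneg (by norm_num)
    intro t ht
    have hA : 0 < 1+(d-1)*t := Apos hd ht.1 ht.2
    have hB : 0 < 1+(x-1)*t := Apos hx ht.1 ht.2
    have hid : (1-t)/(1+(x-1)*t) - (1-t)/(1+(d-1)*t) + (x-d) * (t*(1-t)/(1+(d-1)*t)^2)
        = (1-t) * ((d-x)*t)^2 / ((1+(d-1)*t)^2 * (1+(x-1)*t)) := by
      have hA'' : 1 + t*(d-1) ≠ 0 := by rw [mul_comm]; exact hA.ne'
      have hB'' : 1 + t*(x-1) ≠ 0 := by rw [mul_comm]; exact hB.ne'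
      field_simp
      ring
    rw [hid]
    exact div_nonneg (mul_nonneg (by linarith [ht.2]) (sq_nonneg _)) (by positivity)
  linarith

lemma shkey10 {d : ℝ} (hd : 0 < d) : shf d - d * shg d ≤ 1 := by
  have h2 := intf hd
  have h3 := intg hd
  have heq : shf d - d * shg d
      = ∫ t in (0:ℝ)..1, ((1-t)/(1+(d-1)*t) + d * (t*(1-t)/(1+(d-1)*t)^2)) := by
    rw [intervalIntegral.integral_add h2 (h3.const_mul _), intervalIntegral.integral_const_mul]
    unfold shf shg
    ring
  rw [heq]
  have hle : (∫ t in (0:ℝ)..1, ((1-t)/(1+(d-1)*t) + d * (t*(1-t)/(1+(d-1)*t)^2)))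
      ≤ ∫ t in (0:ℝ)..1, (1:ℝ) := by
    apply intervalIntegral.integral_mono_on (by norm_num) (h2.add (h3.const_mul _))
      intervalIntegrable_const
    intro t ht
    have hA : 0 < 1+(d-1)*t := Apos hd ht.1 ht.2
    have hid : (1-t)/(1+(d-1)*t) + d * (t*(1-t)/(1+(d-1)*t)^2)
        = 1 - (d*t)^2/(1+(d-1)*t)^2 := by
      have hA'' : 1 + t*(d-1) ≠ 0 := by rw [mul_comm]; exact hA.ne'
      field_simp
      ring
    rw [hid]
    have : 0 ≤ (d*t)^2/(1+(d-1)*t)^2 := by positivity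
    linarith
  simpa using hle

lemma shf_le_one {d : ℝ} (hd : 0 < d) : shf d ≤ 1 := by
  have h1 := shkey10 hd
  have h2 := shg_nonpos hd
  nlinarith

lemma shf_mono {x e : ℝ} (hx : 0 ≤ x) (hxe : x ≤ e) (he : 0 < e) : shf e ≤ shf x := by
  rcases eq_or_lt_of_le hx with h | h
  · rw [← h, shf_zero]
    exact shf_le_one he
  · have h1 := shkey1 he h
    have h2 := shg_nonpos he
    nlinarith

lemma shkey5 {θ d : ℝ} (hθ0 : 0 < θ) (hθ1 : θ < 1) (hd : Real.exp (1/(1-θ)) ≤ d) :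
    θ * Real.log d / d ≤ shf d := by
  have hpos : 0 < 1/(1-θ) := div_pos one_pos (by linarith)
  have hd1 : 1 < d := lt_of_lt_of_le (by linarith [Real.add_one_lt_exp hpos.ne']) hd
  have hd0 : 0 < d := by linarith
  have hL : 1/(1-θ) ≤ Real.log d := (Real.le_log_iff_exp_le hd0).mpr hd
  have hL0 : 0 ≤ Real.log d := le_trans hpos.le hL
  have hL1 : 1 ≤ (1-θ) * Real.log d := by
    rw [div_le_iff₀ (by linarith)] at hL
    linarith [hL]
  rw [shf_eq hd0 (by linarith : d ≠ 1)]
  rw [div_le_div_iff₀ hd0 (pow_pos (by linarith : (0:ℝ) < d - 1) 2)]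
  nlinarith [mul_le_mul_of_nonneg_left hL1 (mul_pos hd0 hd0).le,
    mul_nonneg (mul_nonneg hθ0.le hL0) (by linarith : (0:ℝ) ≤ d - 1)]

section Comb

variable {V : Type*} [Fintype V] [DecidableEq V] (G : SimpleGraph V) [DecidableRel G.Adj]

/-- degree of `v` into `A` -/
def ndeg (A : Finset V) (v : V) : ℕ := (A.filter (G.Adj v)).card

/-- sum of degrees within `A` -/
def DD (A : Finset V) : ℕ := ∑ v ∈ A, ndeg G A v

lemma tri_free {u v w : V} (h3 : G.CliqueFree 3) (h1 : G.Adj v u) (h2 : G.Adj v w)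
    (h12 : G.Adj u w) : False :=
  h3 {v, u, w} (SimpleGraph.is3Clique_triple_iff.mpr ⟨h1, h2, h12⟩)

lemma swapsum (s t : Finset V) :
    ∑ x ∈ s, (t.filter (G.Adj x)).card = ∑ y ∈ t, (s.filter (G.Adj y)).card := by
  simp only [Finset.card_filter]
  rw [Finset.sum_comm]
  exact Finset.sum_congr rfl fun y _ => Finset.sum_congr rfl fun x _ => by
    simp only [G.adj_comm]

lemma swapw (s t : Finset V) (w : V → ℕ) :
    ∑ v ∈ s, ∑ u ∈ t.filter (G.Adj v), w u = ∑ u ∈ t, (s.filter (G.Adj u)).card * w u := by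
  have h1 : ∀ v, ∑ u ∈ t.filter (G.Adj v), w u = ∑ u ∈ t, if G.Adj v u then w u else 0 :=
    fun v => Finset.sum_filter _ _
  simp only [h1]
  rw [Finset.sum_comm]
  refine Finset.sum_congr rfl fun u _ => ?_
  have : ∀ v, (if G.Adj v u then w u else 0) = if G.Adj u v then w u else 0 := by
    intro v; simp only [G.adj_comm]
  simp only [this]
  rw [← Finset.sum_filter, Finset.sum_const, smul_eq_mul]

lemma ndeg_le (A : Finset V) (v : V) (hv : v ∈ A) : ndeg G A v ≤ A.card - 1 := by
  have h : A.filter (G.Adj v) ⊆ A.erase v := by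
    intro u hu
    rw [Finset.mem_filter] at hu
    exact Finset.mem_erase.mpr ⟨fun h => G.irrefl (h ▸ hu.2), hu.1⟩
  calc ndeg G A v ≤ (A.erase v).card := Finset.card_le_card h
    _ = A.card - 1 := Finset.card_erase_of_mem hv

lemma pervertex (h3 : G.CliqueFree 3) (A : Finset V) (v : V) (hv : v ∈ A) :
    DD G (A \ insert v (A.filter (G.Adj v))) + 2 * ∑ u ∈ A.filter (G.Adj v), ndeg G A u
      ≤ DD G A := by
  set B := A.filter (G.Adj v) with hB
  set Av := A \ insert v B with hAv
  have hBA : insert v B ⊆ A := by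
    intro x hx
    rcases Finset.mem_insert.mp hx with rfl | hx
    · exact hv
    · exact Finset.mem_of_mem_filter _ hx
  have hvB : v ∉ B := fun h => G.irrefl ((Finset.mem_filter.mp h).2)
  have hsplit : DD G A = (∑ x ∈ Av, ndeg G A x) + (ndeg G A v + ∑ u ∈ B, ndeg G A u) := by
    rw [DD, ← Finset.sum_sdiff hBA, Finset.sum_insert hvB]
  have hdisj : Disjoint Av B := by
    apply Finset.sdiff_disjoint.mono_right
    exact Finset.subset_insert _ _
  have step_b : ∀ x ∈ Av, (Av.filter (G.Adj x)).card + (B.filter (G.Adj x)).card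
      ≤ ndeg G A x := by
    intro x _
    rw [ndeg, ← Finset.card_union_of_disjoint (hdisj.mono (Finset.filter_subset _ _)
      (Finset.filter_subset _ _))]
    apply Finset.card_le_card
    apply Finset.union_subset
    · exact Finset.filter_subset_filter _ (Finset.sdiff_subset)
    · exact Finset.filter_subset_filter _ (Finset.filter_subset _ _)
  have step_c : ∑ x ∈ Av, (B.filter (G.Adj x)).card = ∑ u ∈ B, (Av.filter (G.Adj u)).card :=
    swapsum G Av B
  have step_d : ∀ u ∈ B, ndeg G A u ≤ (Av.filter (G.Adj u)).card + 1 := by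
    intro u hu
    have hadj_vu : G.Adj v u := (Finset.mem_filter.mp hu).2
    have hsub : A.filter (G.Adj u) ⊆ insert v (Av.filter (G.Adj u)) := by
      intro w hw
      rw [Finset.mem_filter] at hw
      rcases eq_or_ne w v with rfl | hwv
      · exact Finset.mem_insert_self _ _
      · apply Finset.mem_insert_of_mem
        rw [Finset.mem_filter]
        refine ⟨?_, hw.2⟩
        rw [hAv, Finset.mem_sdiff]
        refine ⟨hw.1, fun hmem => ?_⟩
        rcases Finset.mem_insert.mp hmem with rfl | hwB
        · exact hwv rfl
        · exact tri_free G h3 hadj_vu (Finset.mem_filter.mp hwB).2 hw.2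
    calc ndeg G A u ≤ (insert v (Av.filter (G.Adj u))).card := Finset.card_le_card hsub
      _ ≤ (Av.filter (G.Adj u)).card + 1 := Finset.card_insert_le _ _
  have hBcard : B.card = ndeg G A v := rfl
  have main : DD G Av + ∑ u ∈ B, ndeg G A u
      ≤ (∑ x ∈ Av, ndeg G A x) + ndeg G A v := by
    have h1 : ∑ u ∈ B, ndeg G A u ≤ (∑ u ∈ B, (Av.filter (G.Adj u)).card) + B.card := by
      calc ∑ u ∈ B, ndeg G A u ≤ ∑ u ∈ B, ((Av.filter (G.Adj u)).card + 1) :=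
            Finset.sum_le_sum step_d
        _ = (∑ u ∈ B, (Av.filter (G.Adj u)).card) + B.card := by
            rw [Finset.sum_add_distrib, Finset.sum_const, smul_eq_mul, mul_one]
    have h2 : DD G Av + ∑ x ∈ Av, (B.filter (G.Adj x)).card ≤ ∑ x ∈ Av, ndeg G A x := by
      rw [DD, ← Finset.sum_add_distrib]
      exact Finset.sum_le_sum step_b
    rw [← step_c] at h1
    omega
  omega

end Comb

section Main

variable {V : Type*} [Fintype V] [DecidableEq V] (G : SimpleGraph V) [DecidableRel G.Adj]

/-- the part of `A` away from the closed neighborhood of `v` -/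
def Avv (A : Finset V) (v : V) : Finset V := A \ insert v (A.filter (G.Adj v))

lemma insert_subset_A {A : Finset V} {v : V} (hv : v ∈ A) :
    insert v (A.filter (G.Adj v)) ⊆ A := by
  intro x hx
  rcases Finset.mem_insert.mp hx with rfl | hx
  · exact hv
  · exact Finset.mem_of_mem_filter _ hx

lemma card_Avv {A : Finset V} {v : V} (hv : v ∈ A) :
    (Avv G A v).card + (ndeg G A v + 1) = A.card := by
  have hvB : v ∉ A.filter (G.Adj v) := fun h => G.irrefl ((Finset.mem_filter.mp h).2)
  have h1 : (insert v (A.filter (G.Adj v))).card ≤ A.card :=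
    Finset.card_le_card (insert_subset_A G hv)
  rw [Finset.card_insert_of_notMem hvB] at h1
  rw [Avv, Finset.card_sdiff_of_subset (insert_subset_A G hv), Finset.card_insert_of_notMem hvB]
  unfold ndeg
  omega

lemma Avv_ssubset {A : Finset V} {v : V} (hv : v ∈ A) : Avv G A v ⊂ A :=
  Finset.sdiff_ssubset (insert_subset_A G hv) (Finset.insert_nonempty _ _)

lemma Avv_notadj {A : Finset V} {v u : V} (hu : u ∈ Avv G A v) : ¬ G.Adj v u := by
  intro hadj
  rw [Avv, Finset.mem_sdiff] at hu
  exact hu.2 (Finset.mem_insert_of_mem (Finset.mem_filter.mpr ⟨hu.1, hadj⟩))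

lemma shearer_main (h3 : G.CliqueFree 3) (A : Finset V) :
    ∃ s : Finset V, s ⊆ A ∧ (∀ x ∈ s, ∀ y ∈ s, x ≠ y → ¬ G.Adj x y) ∧
      (A.card : ℝ) * shf ((DD G A : ℝ) / (A.card : ℝ)) ≤ (s.card : ℝ) := by
  induction A using Finset.strongInductionOn with
  | _ A IH =>
  rcases Finset.eq_empty_or_nonempty A with rfl | hA
  · exact ⟨∅, by simp⟩
  have hn0 : 0 < A.card := Finset.card_pos.mpr hA
  have hnR : (0:ℝ) < (A.card : ℝ) := by exact_mod_cast hn0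
  rcases Nat.eq_zero_or_pos (DD G A) with hD0 | hDpos
  · -- no edges inside A : A itself is independent
    refine ⟨A, Finset.Subset.refl A, ?_, ?_⟩
    · intro x hx y hy _ hadj
      have hx0 : ndeg G A x = 0 := by
        have := (Finset.sum_eq_zero_iff).mp hD0 x hx
        exact this
      have hy' : y ∈ A.filter (G.Adj x) := Finset.mem_filter.mpr ⟨hy, hadj⟩
      rw [ndeg, Finset.card_eq_zero] at hx0
      rw [hx0] at hy'
      exact absurd hy' (Finset.notMem_empty y)
    · rw [hD0]
      push_cast
      rw [zero_div, shf_zero, mul_one]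
  -- main case
  set n := A.card with hn
  set D := DD G A with hDdef
  set d : ℝ := (D:ℝ)/(n:ℝ) with hd_def
  have hd : 0 < d := div_pos (by exact_mod_cast hDpos) hnR
  have hcard : ∀ v ∈ A, ((Avv G A v).card : ℝ) = (n:ℝ) - 1 - (ndeg G A v : ℝ) := by
    intro v hv
    have h := card_Avv G hv
    have h' : ((Avv G A v).card : ℝ) + ((ndeg G A v : ℝ) + 1) = (n:ℝ) := by
      exact_mod_cast congrArg (fun x : ℕ => (x : ℝ)) h
    linarith
  have hsumnd : ∑ v ∈ A, (ndeg G A v : ℝ) = (D:ℝ) := by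
    rw [hDdef, DD]
    push_cast
    rfl
  have SnV : ∑ v ∈ A, ((Avv G A v).card : ℝ) = (n:ℝ)^2 - n - D := by
    rw [Finset.sum_congr rfl hcard, Finset.sum_sub_distrib, Finset.sum_sub_distrib,
      Finset.sum_const, hsumnd, Finset.sum_const]
    push_cast [← hn]
    ring
  -- edge count bound
  have SDnat : (∑ v ∈ A, DD G (Avv G A v)) + 2 * ∑ u ∈ A, ndeg G A u * ndeg G A u
      ≤ n * D := by
    have h1 : ∀ v ∈ A, DD G (Avv G A v) + 2 * ∑ u ∈ A.filter (G.Adj v), ndeg G A u ≤ D :=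
      fun v hv => pervertex G h3 A v hv
    have h2 := Finset.sum_le_sum h1
    rw [Finset.sum_const, smul_eq_mul] at h2
    rw [Finset.sum_add_distrib, ← Finset.mul_sum, swapw G A A (ndeg G A)] at h2
    exact h2
  have CS : (D:ℝ)^2 / (n:ℝ) ≤ ∑ u ∈ A, (ndeg G A u : ℝ)^2 := by
    have h := sq_sum_le_card_mul_sum_sq (s := A) (f := fun u => (ndeg G A u : ℝ))
    rw [hsumnd] at h
    rw [div_le_iff₀ hnR]
    calc (D:ℝ)^2 ≤ (A.card : ℝ) * ∑ u ∈ A, (ndeg G A u : ℝ)^2 := by exact_mod_cast h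
      _ = (∑ u ∈ A, (ndeg G A u : ℝ)^2) * (n:ℝ) := by rw [← hn]; ring
  have SDbound : ∑ v ∈ A, (DD G (Avv G A v) : ℝ) ≤ (n:ℝ)*D - 2*((D:ℝ)^2/(n:ℝ)) := by
    have hcast : (∑ v ∈ A, (DD G (Avv G A v) : ℝ))
        + 2 * ∑ u ∈ A, (ndeg G A u : ℝ) * (ndeg G A u : ℝ) ≤ (n:ℝ) * D := by
      exact_mod_cast SDnat
    have hsq : ∑ u ∈ A, (ndeg G A u : ℝ) * (ndeg G A u : ℝ)
        = ∑ u ∈ A, (ndeg G A u : ℝ)^2 := Finset.sum_congr rfl fun u _ => (sq _).symm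
    rw [hsq] at hcast
    linarith [CS]
  -- tangent line step
  have claim1 : ∀ v ∈ A,
      1 + ((Avv G A v).card : ℝ) * shf d
        + ((DD G (Avv G A v) : ℝ) - ((Avv G A v).card : ℝ) * d) * shg d
      ≤ 1 + ((Avv G A v).card : ℝ)
          * shf ((DD G (Avv G A v) : ℝ) / ((Avv G A v).card : ℝ)) := by
    intro v _
    set m := (Avv G A v).card with hm
    set E := DD G (Avv G A v) with hE
    rcases Nat.eq_zero_or_pos m with hm0 | hmpos
    · have hAv : Avv G A v = ∅ := Finset.card_eq_zero.mp hm0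
      have hE0 : E = 0 := by rw [hE, hAv]; rfl
      rw [hm0, hE0]
      push_cast
      norm_num
    · have hmR : (0:ℝ) < (m:ℝ) := by exact_mod_cast hmpos
      rcases Nat.eq_zero_or_pos E with hE0 | hEpos
      · rw [hE0]
        push_cast
        rw [zero_div, shf_zero, mul_one]
        nlinarith [mul_le_mul_of_nonneg_left (shkey10 hd) hmR.le]
      · have hx : (0:ℝ) < (E:ℝ)/(m:ℝ) := div_pos (by exact_mod_cast hEpos) hmR
        have h1 := mul_le_mul_of_nonneg_left (shkey1 hd hx) hmR.le
        have h3 : (m:ℝ) * (shf d + ((E:ℝ)/(m:ℝ) - d) * shg d)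
            = (m:ℝ) * shf d + ((E:ℝ) - (m:ℝ)*d) * shg d := by
          field_simp
        linarith [h1, h3]
  -- averaging
  have havg : ∃ v ∈ A, (n:ℝ) * shf d
      ≤ 1 + ((Avv G A v).card : ℝ) * shf d
        + ((DD G (Avv G A v) : ℝ) - ((Avv G A v).card : ℝ) * d) * shg d := by
    apply Finset.exists_le_of_sum_le hA
    rw [Finset.sum_const, nsmul_eq_mul, ← hn]
    have hexp : ∑ v ∈ A, (1 + ((Avv G A v).card : ℝ) * shf d
        + ((DD G (Avv G A v) : ℝ) - ((Avv G A v).card : ℝ) * d) * shg d)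
        = (n:ℝ) + ((n:ℝ)^2 - n - D) * shf d
          + ((∑ v ∈ A, (DD G (Avv G A v) : ℝ)) - ((n:ℝ)^2 - n - D) * d) * shg d := by
      rw [Finset.sum_add_distrib, Finset.sum_add_distrib, Finset.sum_const, ← Finset.sum_mul,
        SnV, ← Finset.sum_mul, Finset.sum_sub_distrib, ← Finset.sum_mul, SnV, nsmul_eq_mul,
        mul_one, ← hn]
    rw [hexp]
    -- numeric core
    have hnd : (n:ℝ) * d = (D:ℝ) := by
      rw [hd_def]; field_simp
    have hnd2 : (n:ℝ) * (d*d) = (D:ℝ)^2/(n:ℝ) := by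
      rw [hd_def]; field_simp
    have e1 : (∑ v ∈ A, (DD G (Avv G A v) : ℝ)) - ((n:ℝ)^2 - n - D) * d
        ≤ (D:ℝ) - (D:ℝ)^2/(n:ℝ) := by
      have h5 : ((n:ℝ)^2 - n - D) * d = (n:ℝ)*D - D - (D:ℝ)^2/(n:ℝ) := by
        rw [hd_def]; field_simp
      linarith [SDbound]
    have e1' : ((∑ v ∈ A, (DD G (Avv G A v) : ℝ)) - ((n:ℝ)^2 - n - D) * d) * shg d
        ≥ ((D:ℝ) - (D:ℝ)^2/(n:ℝ)) * shg d :=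
      mul_le_mul_of_nonpos_right e1 (shg_nonpos hd)
    have h4 := mul_le_mul_of_nonneg_left (shkey3 hd) hnR.le
    have h5 : (n:ℝ) * ((d+1) * shf d) = ((D:ℝ)+n) * shf d := by
      linear_combination (shf d) * hnd
    have h6 : (n:ℝ) * (1 + (d-d^2) * shg d) = (n:ℝ) + ((D:ℝ) - (D:ℝ)^2/(n:ℝ)) * shg d := by
      linear_combination (shg d) * hnd - (shg d) * hnd2
    -- combine
    rw [h5, h6] at h4
    have h7 : (n:ℝ) * ((n:ℝ) * shf d) = (n:ℝ)^2 * shf d := by ring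
    have h8 : (n:ℝ)^2 * shf d = ((n:ℝ)^2 - n - D)*shf d + ((D:ℝ)+n)*shf d := by ring
    linarith [h4, e1', h7, h8]
  obtain ⟨v, hv, hT⟩ := havg
  obtain ⟨s₀, hs₀A, hs₀ind, hs₀card⟩ := IH (Avv G A v) (Avv_ssubset G hv)
  have hvs₀ : v ∉ s₀ := by
    intro hvs
    have := hs₀A hvs
    rw [Avv, Finset.mem_sdiff] at this
    exact this.2 (Finset.mem_insert_self _ _)
  refine ⟨insert v s₀, ?_, ?_, ?_⟩
  · apply Finset.insert_subset hv
    exact hs₀A.trans (Finset.sdiff_subset)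
  · intro x hx y hy hxy
    rcases Finset.mem_insert.mp hx with rfl | hx'
    · rcases Finset.mem_insert.mp hy with h | hy'
      · exact absurd h.symm hxy
      · exact Avv_notadj G (hs₀A hy')
    · rcases Finset.mem_insert.mp hy with rfl | hy'
      · exact fun h => Avv_notadj G (hs₀A hx') (h.symm)
      · exact hs₀ind x hx' y hy' hxy
  · have hcardins : (insert v s₀).card = s₀.card + 1 := Finset.card_insert_of_notMem hvs₀
    have := claim1 v hv
    rw [hcardins]
    push_cast
    linarith [hT, this, hs₀card]

end Main


/-- **Off-diagonal Ramsey bound.** For every `ε > 0` there is `k₀` such that for all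
`k ≥ k₀`, every graph on at least `(1 + ε) k² / log k` vertices contains either a
triangle or an independent set of size `k`; that is, `R(3,k) ≤ (1 + ε) k² / log k`. -/
theorem ramsey_three_k (ε : ℝ) (hε : 0 < ε) :
    ∃ k₀ : ℕ, ∀ k : ℕ, k₀ ≤ k →
      ∀ (N : ℕ) (G : SimpleGraph (Fin N)),
        (1 + ε) * k ^ 2 / Real.log k ≤ N →
          (¬ G.CliqueFree 3) ∨
            ∃ s : Finset (Fin N), (∀ x ∈ s, ∀ y ∈ s, x ≠ y → ¬ G.Adj x y) ∧ s.card = k := by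
  set θ : ℝ := (2+ε)/(2+2*ε) with hθdef
  have hθ0 : 0 < θ := div_pos (by linarith) (by linarith)
  have hθ1 : θ < 1 := by
    rw [hθdef, div_lt_one (by linarith)]
    linarith
  refine ⟨max 2 (⌈Real.exp (1/(1-θ))⌉₊ + 1), fun k hk N G hN => ?_⟩
  by_cases h3 : G.CliqueFree 3
  swap
  · exact Or.inl h3
  right
  letI : DecidableRel G.Adj := Classical.decRel _
  have hk2 : 2 ≤ k := le_trans (le_max_left _ _) hk
  have hkR : (2:ℝ) ≤ (k:ℝ) := by exact_mod_cast hk2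
  have hkpos : (0:ℝ) < (k:ℝ) := by linarith
  have hlogk : 0 < Real.log k := Real.log_pos (by linarith)
  have hexpk : Real.exp (1/(1-θ)) ≤ (k:ℝ) := by
    have h1 : ⌈Real.exp (1/(1-θ))⌉₊ + 1 ≤ k := le_trans (le_max_right _ _) hk
    calc Real.exp (1/(1-θ)) ≤ (⌈Real.exp (1/(1-θ))⌉₊ : ℝ) := Nat.le_ceil _
      _ ≤ (k:ℝ) := by exact_mod_cast Nat.le_of_succ_le h1
  by_cases hbig : ∃ v, k ≤ ndeg G Finset.univ v
  · obtain ⟨v, hv⟩ := hbig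
    obtain ⟨t, hts, htc⟩ := Finset.exists_subset_card_eq hv
    refine ⟨t, ?_, htc⟩
    intro x hx y hy _ hadj
    exact tri_free G h3 (Finset.mem_filter.mp (hts hx)).2 (Finset.mem_filter.mp (hts hy)).2 hadj
  · push_neg at hbig
    obtain ⟨s, _, hsind, hscard⟩ := shearer_main G h3 Finset.univ
    have hnum : (0:ℝ) < (1+ε) * (k:ℝ)^2 := by nlinarith
    have hN0 : (0:ℝ) < (N:ℝ) := lt_of_lt_of_le (div_pos hnum hlogk) hN
    have hcardU : (Finset.univ : Finset (Fin N)).card = N := by simp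
    rw [hcardU] at hscard
    have hDle : (DD G (Finset.univ : Finset (Fin N)) : ℝ) ≤ (N:ℝ) * (k:ℝ) := by
      have h1 : DD G (Finset.univ : Finset (Fin N)) ≤ N * k := by
        rw [DD]
        calc ∑ v ∈ Finset.univ, ndeg G Finset.univ v ≤ ∑ _v ∈ (Finset.univ : Finset (Fin N)), k :=
              Finset.sum_le_sum fun v _ => (hbig v).le
          _ = N * k := by rw [Finset.sum_const, smul_eq_mul, hcardU]
      exact_mod_cast h1
    have hdlek : (DD G (Finset.univ : Finset (Fin N)) : ℝ)/(N:ℝ) ≤ (k:ℝ) := by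
      rw [div_le_iff₀ hN0]
      linarith
    have hmono : shf (k:ℝ) ≤ shf ((DD G (Finset.univ : Finset (Fin N)) : ℝ)/(N:ℝ)) :=
      shf_mono (div_nonneg (Nat.cast_nonneg _) hN0.le) hdlek hkpos
    have h5 := shkey5 hθ0 hθ1 hexpk
    have hval : (1+ε)*θ = 1 + ε/2 := by
      rw [hθdef]
      field_simp
    have hchain : (k:ℝ) ≤ (s.card : ℝ) := by
      have t1 : (k:ℝ) ≤ (1+ε)*θ*(k:ℝ) := by
        rw [hval]
        nlinarith
      have t2 : (1+ε)*θ*(k:ℝ) = ((1+ε)*(k:ℝ)^2/Real.log k) * (θ * Real.log k / (k:ℝ)) := by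
        field_simp
      have t3 : ((1+ε)*(k:ℝ)^2/Real.log k) * (θ*Real.log k/(k:ℝ))
          ≤ (N:ℝ) * (θ*Real.log k/(k:ℝ)) := by
        apply mul_le_mul_of_nonneg_right hN
        positivity
      have t4 : (N:ℝ) * (θ*Real.log k/(k:ℝ)) ≤ (N:ℝ) * shf (k:ℝ) :=
        mul_le_mul_of_nonneg_left h5 hN0.le
      have t5 : (N:ℝ) * shf (k:ℝ)
          ≤ (N:ℝ) * shf ((DD G (Finset.univ : Finset (Fin N)) : ℝ)/(N:ℝ)) :=
        mul_le_mul_of_nonneg_left hmono hN0.le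
      linarith [t1, t2.le, t3, t4, t5, hscard]
    have hks : k ≤ s.card := by exact_mod_cast hchain
    obtain ⟨t, hts, htc⟩ := Finset.exists_subset_card_eq hks
    exact ⟨t, fun x hx y hy hxy => hsind x (hts hx) y (hts hy) hxy, htc⟩
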